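/- Fix for each agent i ∈ [n] a partition M^i = (M^i_1,…,M^i_n) of [m] into n parts, and assume m ≥ 4. For a uniformly random choice function σ ∈ [n]^[n], the probability that some good g ∈ [m] satisfies χ^{R^σ}_g ≥ 3·log m is at most 1/m²; equivalently, the number of choice functions σ for which max_{g∈[m]} |{i : g ∈ M^i_{σ(i)}}| ≥ 3 log m is at most n^n/m². -/

import Mathlib

open Finset

open scoped Nat

/-- `X : Fin n → Finset α` is a partition of the (finite) ground set `α` into `n`
(possibly empty) pairwise disjoint parts whose union is everything. -/
def IsPartition {α : Type*} [DecidableEq α] [Fintype α] {n : ℕ}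
    (X : Fin n → Finset α) : Prop :=
  (∀ i j : Fin n, i ≠ j → Disjoint (X i) (X j)) ∧
    Finset.univ.biUnion X = Finset.univ

lemma two_pow_le_factorial_aux : ∀ t : ℕ, 4 ≤ t → 2 ^ t ≤ Nat.factorial t
  | 0, h => by omega
  | 1, h => by omega
  | 2, h => by norm_num [Nat.factorial] at h
  | 3, h => by omega
  | 4, _ => by norm_num [Nat.factorial]
  | (t+5), _ => by
      have ih := two_pow_le_factorial_aux (t+4) (by omega)
      calc 2 ^ (t+5) = 2 * 2 ^ (t+4) := by ring
        _ ≤ (t+5) * Nat.factorial (t+4) := Nat.mul_le_mul (by omega) ih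
        _ = Nat.factorial (t+5) := rfl

/-- with `m ≥ 4`, for a uniformly random choice function
`σ ∈ [n]^[n]` the probability that some good has multiplicity at least `3 log m`
is at most `1/m²`; equivalently, the number of choice functions `σ` for which
`max_g |{i : g ∈ M i (σ i)}| ≥ 3 log m` is at most `n^n / m²`. -/
theorem linfty_chernoff_bound
    (n m : ℕ) (hn : 0 < n) (hm : 4 ≤ m)
    (M : Fin n → Fin n → Finset (Fin m))
    (hM : ∀ i, IsPartition (M i)) :
    (Nat.card {σ : Fin n → Fin n //
        ∃ g : Fin m,
          3 * Real.logb 2 m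
            ≤ ((Finset.univ.filter (fun i => g ∈ M i (σ i))).card : ℝ)} : ℝ)
      ≤ (n : ℝ) ^ n / (m : ℝ) ^ 2 := by
  classical
  set t : ℕ := ⌈3 * Real.logb 2 m⌉₊ with htdef
  have hm0 : (0:ℝ) < m := by positivity
  have hmr : (4:ℝ) ≤ (m:ℝ) := by exact_mod_cast hm
  have hlogt : (3:ℝ) * Real.logb 2 m ≤ (t : ℝ) := Nat.le_ceil _
  -- t ≥ 6
  have hlog2 : (2:ℝ) ≤ Real.logb 2 m := by
    rw [Real.le_logb_iff_rpow_le (by norm_num) hm0]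
    have h22 : (2:ℝ) ^ (2:ℝ) = 4 := by
      have := Real.rpow_natCast (2:ℝ) 2
      norm_num at this
      linarith
    linarith
  have ht6 : 6 ≤ t := by
    have : (6:ℝ) ≤ (t:ℝ) := by linarith
    exact_mod_cast this
  -- m^3 ≤ 2^t ≤ t!
  have hm3 : m ^ 3 ≤ Nat.factorial t := by
    have h1 : (m:ℝ) ^ (3:ℕ) ≤ (2:ℝ) ^ (t:ℝ) := by
      rw [← Real.logb_le_iff_le_rpow (by norm_num) (by positivity), Real.logb_pow]
      push_cast
      linarith
    have h2 : (m:ℝ) ^ 3 ≤ ((2 ^ t : ℕ) : ℝ) := by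
      push_cast
      rw [← Real.rpow_natCast (2:ℝ) t]
      exact h1
    have h3 : m ^ 3 ≤ 2 ^ t := by exact_mod_cast h2
    exact h3.trans (two_pow_le_factorial_aux t (by omega))
  -- uniqueness of the part containing g
  have huniq : ∀ g : Fin m, ∀ i a b : Fin n, g ∈ M i a → g ∈ M i b → a = b := by
    intro g i a b ha hb
    by_contra hab
    exact (Finset.disjoint_left.1 ((hM i).1 a b hab)) ha hb
  -- counting
  set P : (Fin n → Fin n) → Prop := fun σ => ∃ g : Fin m,
      3 * Real.logb 2 m ≤ ((Finset.univ.filter (fun i => g ∈ M i (σ i))).card : ℝ)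
    with hPdef
  have hNat : Nat.card {σ : Fin n → Fin n // P σ} = (univ.filter P).card := by
    rw [Nat.card_eq_fintype_card, Fintype.card_subtype]
  -- per (g, T) bound
  have hT : ∀ g : Fin m, ∀ T : Finset (Fin n), T.card = t →
      (univ.filter (fun σ : Fin n → Fin n => ∀ i ∈ T, g ∈ M i (σ i))).card
        ≤ n ^ (n - t) := by
    intro g T hTc
    have key := Finset.card_le_card_of_injOn
      (s := univ.filter (fun σ : Fin n → Fin n => ∀ i ∈ T, g ∈ M i (σ i)))
      (f := fun (σ : Fin n → Fin n) (i : (univ \ T : Finset (Fin n))) => σ i)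
      (t := (univ : Finset ((univ \ T : Finset (Fin n)) → Fin n)))
      (fun a _ => mem_univ _) ?_
    · refine key.trans (le_of_eq ?_)
      rw [Finset.card_univ, Fintype.card_fun, Fintype.card_coe, Fintype.card_fin,
        Finset.card_sdiff_of_subset (subset_univ T), hTc, Finset.card_univ, Fintype.card_fin]
    · intro σ hσ σ' hσ' hff
      simp only [coe_filter, Set.mem_setOf_eq, mem_univ, true_and] at hσ hσ'
      funext i
      by_cases hi : i ∈ T
      · exact huniq g i _ _ (hσ i hi) (hσ' i hi)
      · have hi' : i ∈ (univ \ T : Finset (Fin n)) := by simp [hi]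
        exact congrFun hff ⟨i, hi'⟩
  -- per g bound
  have hg : ∀ g : Fin m,
      (univ.filter (fun σ : Fin n → Fin n =>
        t ≤ (univ.filter (fun i => g ∈ M i (σ i))).card)).card
        ≤ n.choose t * n ^ (n - t) := by
    intro g
    have hsub : (univ.filter (fun σ : Fin n → Fin n =>
        t ≤ (univ.filter (fun i => g ∈ M i (σ i))).card))
        ⊆ (Finset.powersetCard t (univ : Finset (Fin n))).biUnion
            (fun T => univ.filter (fun σ : Fin n → Fin n => ∀ i ∈ T, g ∈ M i (σ i))) := by
      intro σ hσ
      simp only [mem_filter, mem_univ, true_and] at hσ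
      obtain ⟨T, hTsub, hTc⟩ := Finset.exists_subset_card_eq hσ
      refine Finset.mem_biUnion.2 ⟨T, Finset.mem_powersetCard.2 ⟨subset_univ T, hTc⟩, ?_⟩
      simp only [mem_filter, mem_univ, true_and]
      intro i hi
      have h' := hTsub hi
      simp only [mem_filter, mem_univ, true_and] at h'
      exact h'
    calc _ ≤ _ := Finset.card_le_card hsub
      _ ≤ ∑ T ∈ Finset.powersetCard t (univ : Finset (Fin n)),
            (univ.filter (fun σ : Fin n → Fin n => ∀ i ∈ T, g ∈ M i (σ i))).card :=
          Finset.card_biUnion_le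
      _ ≤ ∑ _T ∈ Finset.powersetCard t (univ : Finset (Fin n)), n ^ (n - t) :=
          Finset.sum_le_sum (fun T hT' => hT g T (Finset.mem_powersetCard.1 hT').2)
      _ = n.choose t * n ^ (n - t) := by
          rw [Finset.sum_const, Finset.card_powersetCard, Finset.card_univ,
            Fintype.card_fin, smul_eq_mul]
  -- assemble
  have hmain : (univ.filter P).card ≤ m * (n.choose t * n ^ (n - t)) := by
    have hsub : univ.filter P ⊆ (univ : Finset (Fin m)).biUnion
        (fun g => univ.filter (fun σ : Fin n → Fin n =>
          t ≤ (univ.filter (fun i => g ∈ M i (σ i))).card)) := by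
      intro σ hσ
      simp only [hPdef, mem_filter, mem_univ, true_and] at hσ
      obtain ⟨g, hgσ⟩ := hσ
      refine Finset.mem_biUnion.2 ⟨g, mem_univ _, ?_⟩
      simp only [mem_filter, mem_univ, true_and]
      exact Nat.ceil_le.2 hgσ
    calc _ ≤ _ := Finset.card_le_card hsub
      _ ≤ ∑ g : Fin m, (univ.filter (fun σ : Fin n → Fin n =>
            t ≤ (univ.filter (fun i => g ∈ M i (σ i))).card)).card :=
          Finset.card_biUnion_le
      _ ≤ ∑ _g : Fin m, n.choose t * n ^ (n - t) := Finset.sum_le_sum (fun g _ => hg g)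
      _ = m * (n.choose t * n ^ (n - t)) := by
          rw [Finset.sum_const, Finset.card_univ, Fintype.card_fin, smul_eq_mul]
  -- numeric: m^3 * (choose * n^{n-t}) ≤ n^n
  have hnum : m ^ 3 * (n.choose t * n ^ (n - t)) ≤ n ^ n := by
    by_cases htn : t ≤ n
    · calc m ^ 3 * (n.choose t * n ^ (n - t))
          ≤ Nat.factorial t * (n.choose t * n ^ (n - t)) := Nat.mul_le_mul_right _ hm3
        _ = (Nat.factorial t * n.choose t) * n ^ (n - t) := by ring
        _ = n.descFactorial t * n ^ (n - t) := by
            rw [Nat.descFactorial_eq_factorial_mul_choose]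
        _ ≤ n ^ t * n ^ (n - t) := Nat.mul_le_mul_right _ (Nat.descFactorial_le_pow n t)
        _ = n ^ n := by rw [← pow_add, Nat.add_sub_cancel' htn]
    · rw [Nat.choose_eq_zero_of_lt (by omega)]
      simp
  -- conclude in ℝ
  have hfin : (univ.filter P).card * m ^ 2 ≤ n ^ n := by
    calc (univ.filter P).card * m ^ 2
        ≤ (m * (n.choose t * n ^ (n - t))) * m ^ 2 := Nat.mul_le_mul_right _ hmain
      _ = m ^ 3 * (n.choose t * n ^ (n - t)) := by ring
      _ ≤ n ^ n := hnum
  rw [hNat, le_div_iff₀ (by positivity : (0:ℝ) < (m:ℝ) ^ 2)]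
  exact_mod_cast hfin
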